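/- Let g be an n-dimensional non-model filiform Lie algebra whose invariant z_2 equals n − 2. Then n ≥ 6 and g has derived length exactly 3: D^2 g ≠ 0 and D^3 g = 0. -/

import Mathlib

/-- A complex Lie algebra `L` of dimension `n` is filiform if its lower central series
`C^1 g = g`, `C^k g = ⁅C^{k-1} g, g⁆` (here `C^k g = LieModule.lowerCentralSeries ℂ L L (k-1)`)
satisfies `dim C^k g = n - k` for all `2 ≤ k ≤ n`. -/
def IsFiliform (L : Type*) [LieRing L] [LieAlgebra ℂ L] (n : ℕ) : Prop :=
  Module.finrank ℂ L = n ∧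
    ∀ k : ℕ, 2 ≤ k → k ≤ n →
      Module.finrank ℂ (LieModule.lowerCentralSeries ℂ L L (k - 1)) = n - k

/-- An adapted basis `e_1, …, e_n` of an `n`-dimensional filiform Lie algebra:
`⁅e_1, e_h⁆ = e_{h-1}` for `3 ≤ h ≤ n`, `⁅e_2, e_h⁆ = 0` for `1 ≤ h ≤ n`, and
`⁅e_3, e_h⁆ = 0` for `2 ≤ h ≤ n`.  The family `e` is indexed by `ℕ`, with
`e 1, …, e n` the members of the basis `b`. -/
structure AdaptedBasis (n : ℕ) (L : Type*) [LieRing L] [LieAlgebra ℂ L] where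
  b : Module.Basis (Fin n) ℂ L
  e : ℕ → L
  he : ∀ i : Fin n, e (i.1 + 1) = b i
  adapted1 : ∀ h, 3 ≤ h → h ≤ n → ⁅e 1, e h⁆ = e (h - 1)
  adapted2 : ∀ h, 1 ≤ h → h ≤ n → ⁅e 2, e h⁆ = 0
  adapted3 : ∀ h, 2 ≤ h → h ≤ n → ⁅e 3, e h⁆ = 0

/-- All brackets among `e_2, …, e_{n-2}` vanish, given that the consecutive ones do. -/
theorem AdaptedBasis.zero_bracket {n : ℕ} {L : Type*} [LieRing L] [LieAlgebra ℂ L]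
    (B : AdaptedBasis n L)
    (hmin : ∀ k, 4 ≤ k → k < n - 2 → ⁅B.e k, B.e (k + 1)⁆ = 0) :
    ∀ d i j, j - i ≤ d → 2 ≤ i → i < j → j ≤ n - 2 → ⁅B.e i, B.e j⁆ = 0 := by
  have hbase : ∀ i, 2 ≤ i → i + 1 ≤ n - 2 → ⁅B.e i, B.e (i + 1)⁆ = 0 := by
    intro i h2 hn
    rcases Nat.lt_or_ge i 4 with h4 | h4
    · interval_cases i
      · exact B.adapted2 3 (by omega) (by omega)
      · exact B.adapted3 4 (by omega) (by omega)
    · exact hmin i h4 (by omega)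
  intro d
  induction d with
  | zero => intro i j h1 h2 h3 h4; omega
  | succ d ih =>
    intro i j h1 h2 h3 h4
    rcases Nat.lt_or_ge (j - i) 2 with hg | hg
    · have hj : j = i + 1 := by omega
      subst hj
      exact hbase i h2 h4
    · have e1 : ⁅B.e 1, B.e (i + 1)⁆ = B.e i := by
        have := B.adapted1 (i + 1) (by omega) (by omega)
        simpa using this
      have e2 : ⁅B.e 1, B.e j⁆ = B.e (j - 1) := B.adapted1 j (by omega) (by omega)
      have hIH1 : ⁅B.e (i + 1), B.e j⁆ = 0 := ih (i + 1) j (by omega) (by omega) (by omega) h4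
      have hIH2 : ⁅B.e (i + 1), B.e (j - 1)⁆ = 0 := by
        rcases Nat.lt_or_ge (i + 1) (j - 1) with hlt | hge
        · exact ih (i + 1) (j - 1) (by omega) (by omega) hlt (by omega)
        · have : i + 1 = j - 1 := by omega
          rw [this]; exact lie_self _
      have jac : ⁅B.e 1, ⁅B.e (i + 1), B.e j⁆⁆
          = ⁅⁅B.e 1, B.e (i + 1)⁆, B.e j⁆ + ⁅B.e (i + 1), ⁅B.e 1, B.e j⁆⁆ :=
        leibniz_lie _ _ _
      rw [hIH1, e1, e2, hIH2, lie_zero, add_zero] at jac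
      exact jac.symm

/-- Let `g` be an `n`-dimensional non-model filiform Lie algebra whose invariant
`z_2 = min {k ≥ 4 : ⁅e_k, e_{k+1}⁆ ≠ 0}` equals `n - 2`.  Then `n ≥ 6` and `g` has
derived length exactly `3`: `D^2 g ≠ 0` and `D^3 g = 0`. -/
theorem derivedLength_three_of_z2_eq
    (n : ℕ) (L : Type*) [LieRing L] [LieAlgebra ℂ L]
    (hfil : IsFiliform L n) (B : AdaptedBasis n L)
    (hnonmodel : ∃ i j, 2 ≤ i ∧ i < j ∧ j ≤ n ∧ ⁅B.e i, B.e j⁆ ≠ 0)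
    (hz2 : sInf {k | 4 ≤ k ∧ ⁅B.e k, B.e (k + 1)⁆ ≠ 0} = n - 2) :
    6 ≤ n ∧ LieAlgebra.derivedSeries ℂ L 2 ≠ ⊥ ∧ LieAlgebra.derivedSeries ℂ L 3 = ⊥ := by
  obtain ⟨hdim, hlcs⟩ := hfil
  obtain ⟨i0, j0, hi0, hij0, hj0, _⟩ := hnonmodel
  have hn3 : 3 ≤ n := by omega
  have hSne : Set.Nonempty {k | 4 ≤ k ∧ ⁅B.e k, B.e (k + 1)⁆ ≠ 0} := by
    by_contra h
    rw [Set.not_nonempty_iff_eq_empty] at h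
    rw [h, Nat.sInf_empty] at hz2
    omega
  have hmem : (n - 2) ∈ {k | 4 ≤ k ∧ ⁅B.e k, B.e (k + 1)⁆ ≠ 0} := hz2 ▸ Nat.sInf_mem hSne
  have hn6 : 6 ≤ n := by have := hmem.1; omega
  have hvn : ⁅B.e (n - 2), B.e (n - 1)⁆ ≠ 0 := by
    have h := hmem.2
    have : n - 2 + 1 = n - 1 := by omega
    rwa [this] at h
  have hmin : ∀ k, 4 ≤ k → k < n - 2 → ⁅B.e k, B.e (k + 1)⁆ = 0 := by
    intro k h4 hk
    by_contra h
    have hkS : k ∈ {k | 4 ≤ k ∧ ⁅B.e k, B.e (k + 1)⁆ ≠ 0} := ⟨h4, h⟩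
    have := Nat.sInf_le hkS
    omega
  have hzero : ∀ i j, 2 ≤ i → i < j → j ≤ n - 2 → ⁅B.e i, B.e j⁆ = 0 :=
    fun i j h2 h3 h4 => B.zero_bracket hmin (j - i) i j le_rfl h2 h3 h4
  have hzero' : ∀ i j, 2 ≤ i → 2 ≤ j → i ≤ n - 2 → j ≤ n - 2 → ⁅B.e i, B.e j⁆ = 0 := by
    intro i j h2 h2' h4 h4'
    rcases lt_trichotomy i j with h | h | h
    · exact hzero i j h2 h h4'
    · rw [h]; exact lie_self _
    · rw [← lie_skew, hzero j i h2' h h4, neg_zero]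
  -- basic bracket computations
  have he1 : ∀ m, 2 ≤ m → m + 1 ≤ n → ⁅B.e 1, B.e (m + 1)⁆ = B.e m := by
    intro m hm hm'
    have := B.adapted1 (m + 1) (by omega) hm'
    simpa using this
  haveI : FiniteDimensional ℂ L := Module.Finite.of_basis B.b
  -- the linearly independent family e_2, …, e_{n-2}
  set w : Fin (n - 3) → L := fun k => B.e (k.1 + 2) with hw
  have hwb : ∀ k : Fin (n - 3), w k = B.b ⟨k.1 + 1, by omega⟩ := by
    intro k
    rw [hw]
    show B.e (k.1 + 2) = _
    exact B.he ⟨k.1 + 1, by omega⟩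
  have hwli : LinearIndependent ℂ w := by
    have hinj : Function.Injective (fun k : Fin (n - 3) => (⟨k.1 + 1, by omega⟩ : Fin n)) := by
      intro a b hab
      simpa [Fin.ext_iff] using hab
    have := B.b.linearIndependent.comp _ hinj
    convert this using 1
    funext k
    exact hwb k
  have hwrank : Module.finrank ℂ (Submodule.span ℂ (Set.range w)) = n - 3 := by
    rw [finrank_span_eq_card hwli]
    simp
  -- e_m ∈ C³ = lcs 2 for 2 ≤ m ≤ n - 2
  have hmemlcs : ∀ m, 2 ≤ m → m ≤ n - 2 → B.e m ∈ LieModule.lowerCentralSeries ℂ L L 2 := by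
    intro m hm hm'
    have h1 : B.e (m + 1) ∈ LieModule.lowerCentralSeries ℂ L L 1 := by
      rw [show (1 : ℕ) = 0 + 1 from rfl, LieModule.lowerCentralSeries_succ]
      rw [← he1 (m + 1) (by omega) (by omega)]
      exact LieSubmodule.lie_mem_lie trivial trivial
    rw [show (2 : ℕ) = 1 + 1 from rfl, LieModule.lowerCentralSeries_succ]
    rw [← he1 m hm (by omega)]
    exact LieSubmodule.lie_mem_lie trivial h1
  -- lcs 2 = span of w, by dimension count
  have hlcs2 : (Submodule.span ℂ (Set.range w))
      = ((LieModule.lowerCentralSeries ℂ L L 2 : LieSubmodule ℂ L L) : Submodule ℂ L) := by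
    apply Submodule.eq_of_le_of_finrank_le
    · rw [Submodule.span_le]
      rintro x ⟨k, rfl⟩
      have := hmemlcs (k.1 + 2) (by omega) (by omega)
      simpa [hw] using this
    · have h3 := hlcs 3 (by omega) (by omega)
      have : (3 : ℕ) - 1 = 2 := rfl
      rw [this] at h3
      rw [hwrank]
      exact le_of_eq h3
  -- D² ≤ lcs 2
  have hD2le : LieAlgebra.derivedSeries ℂ L 2 ≤ LieModule.lowerCentralSeries ℂ L L 2 :=
    LieModule.derivedSeries_le_lowerCentralSeries ℂ L 2
  -- all brackets of elements of span of w vanish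
  have habel : ∀ x ∈ Submodule.span ℂ (Set.range w), ∀ y ∈ Submodule.span ℂ (Set.range w),
      ⁅x, y⁆ = 0 := by
    intro x hx y hy
    induction hx, hy using Submodule.span_induction₂ with
    | mem_mem a b ha hb =>
      obtain ⟨k, rfl⟩ := ha
      obtain ⟨l, rfl⟩ := hb
      exact hzero' (k.1 + 2) (l.1 + 2) (by omega) (by omega) (by omega) (by omega)
    | zero_left y hy => exact zero_lie y
    | zero_right x hx => exact lie_zero x
    | add_left x y z hx hy hz h1 h2 => rw [add_lie, h1, h2, add_zero]
    | add_right x y z hx hy hz h1 h2 => rw [lie_add, h1, h2, add_zero]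
    | smul_left r x y hx hy h => rw [smul_lie, h, smul_zero]
    | smul_right r x y hx hy h => rw [lie_smul, h, smul_zero]
  refine ⟨hn6, ?_, ?_⟩
  · -- D² ≠ ⊥
    have hen1 : B.e (n - 1) ∈ LieAlgebra.derivedSeries ℂ L 1 := by
      rw [show (1 : ℕ) = 0 + 1 from rfl, LieAlgebra.derivedSeries_def,
        LieAlgebra.derivedSeriesOfIdeal_succ, LieAlgebra.derivedSeriesOfIdeal_zero]
      have : ⁅B.e 1, B.e n⁆ = B.e (n - 1) := B.adapted1 n (by omega) le_rfl
      rw [← this]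
      exact LieSubmodule.lie_mem_lie trivial trivial
    have hen2 : B.e (n - 2) ∈ LieAlgebra.derivedSeries ℂ L 1 := by
      rw [show (1 : ℕ) = 0 + 1 from rfl, LieAlgebra.derivedSeries_def,
        LieAlgebra.derivedSeriesOfIdeal_succ, LieAlgebra.derivedSeriesOfIdeal_zero]
      have h1 : ⁅B.e 1, B.e (n - 1)⁆ = B.e (n - 2) := by
        have := B.adapted1 (n - 1) (by omega) (by omega)
        rwa [show n - 1 - 1 = n - 2 by omega] at this
      rw [← h1]
      exact LieSubmodule.lie_mem_lie trivial trivial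
    have hbr : ⁅B.e (n - 2), B.e (n - 1)⁆ ∈ LieAlgebra.derivedSeries ℂ L 2 := by
      rw [show (2 : ℕ) = 1 + 1 from rfl, LieAlgebra.derivedSeries_def,
        LieAlgebra.derivedSeriesOfIdeal_succ, ← LieAlgebra.derivedSeries_def]
      exact LieSubmodule.lie_mem_lie hen2 hen1
    intro hbot
    rw [hbot] at hbr
    exact hvn (by simpa using hbr)
  · -- D³ = ⊥
    rw [show (3 : ℕ) = 2 + 1 from rfl, LieAlgebra.derivedSeries_def,
      LieAlgebra.derivedSeriesOfIdeal_succ, ← LieAlgebra.derivedSeries_def]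
    rw [LieSubmodule.lie_eq_bot_iff]
    intro x hx m hm
    have hx' : x ∈ Submodule.span ℂ (Set.range w) := by
      rw [hlcs2]; exact (LieSubmodule.mem_toSubmodule _).mpr (hD2le hx)
    have hm' : m ∈ Submodule.span ℂ (Set.range w) := by
      rw [hlcs2]; exact (LieSubmodule.mem_toSubmodule _).mpr (hD2le hm)
    exact habel x hx' m hm'
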